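/- For two nonzero vectors u, v ∈ ℝ^N and a random hyperplane through the origin with normal vector w chosen so that the angle θ between u and v satisfies the standard uniform-direction property, the probability that u and v lie on the same side of the hyperplane (i.e., sign(⟨u,w⟩) = sign(⟨v,w⟩)) equals 1 − θ/π, where θ ∈ [0, π] is the angle between u and v. -/

import Mathlib

open MeasureTheory RealInnerProductSpace Module Set

namespace Stmt11Aux

variable {N : ℕ}

local notation "E" => EuclideanSpace ℝ (Fin N)

lemma extend_onb {k : ℕ} (hk : k ≤ N) {x : Fin k → E} (hx : Orthonormal ℝ x) :
    ∃ B : OrthonormalBasis (Fin N) ℝ E,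
      ∀ i : Fin k, B ⟨(i : ℕ), lt_of_lt_of_le i.2 hk⟩ = x i := by
  have hcard : finrank ℝ E = Fintype.card (Fin N) := by simp
  let s : Set (Fin N) := {i | (i : ℕ) < k}
  let emb : s → Fin k := fun i => ⟨(i : Fin N), i.2⟩
  have hemb : Function.Injective emb := by
    intro a b hab
    apply Subtype.ext
    apply Fin.ext
    have : ((emb a : Fin k) : ℕ) = ((emb b : Fin k) : ℕ) := by rw [hab]
    exact this
  have hrestrict :
      s.domRestrict (fun i : Fin N => if h : (i : ℕ) < k then x ⟨i, h⟩ else 0) = x ∘ emb := by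
    funext i
    have hi : ((i : Fin N) : ℕ) < k := i.2
    simp only [domRestrict, Function.comp_apply]
    rw [dif_pos hi]
  obtain ⟨B, hB⟩ := Orthonormal.exists_orthonormalBasis_extension_of_card_eq hcard
      (v := fun i : Fin N => if h : (i : ℕ) < k then x ⟨i, h⟩ else 0) (s := s)
      (by rw [hrestrict]; exact hx.comp emb hemb)
  refine ⟨B, fun i => ?_⟩
  rw [hB ⟨(i : ℕ), lt_of_lt_of_le i.2 hk⟩ (by simp [s, i.2])]
  simp [i.2]

lemma ext_isometry' {k : ℕ} (hk : k ≤ N) {x y : Fin k → E}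
    (hx : Orthonormal ℝ x) (hy : Orthonormal ℝ y) :
    ∃ g : E ≃ₗᵢ[ℝ] E, ∀ i, g (x i) = y i := by
  obtain ⟨B, hB⟩ := extend_onb hk hx
  obtain ⟨B', hB'⟩ := extend_onb hk hy
  refine ⟨B.repr.trans B'.repr.symm, fun i => ?_⟩
  rw [← hB i, ← hB' i]
  simp [LinearIsometryEquiv.trans_apply, OrthonormalBasis.repr_self,
    OrthonormalBasis.repr_symm_single]

lemma inner_eq_zero_of_mem_span {s : Set E} {e : E} (h : ∀ x ∈ s, ⟪x, e⟫ = 0) {z : E}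
    (hz : z ∈ Submodule.span ℝ s) : ⟪z, e⟫ = 0 := by
  induction hz using Submodule.span_induction with
  | mem x hx => exact h x hx
  | zero => simp
  | add x y _ _ hx hy => rw [inner_add_left, hx, hy]; ring
  | smul t x _ hx => rw [real_inner_smul_left, hx]; ring

lemma range_snoc {α : Type*} {d : ℕ} (cc : Fin d → α) (f : α) :
    Set.range (Fin.snoc cc f : Fin (d+1) → α) = insert f (Set.range cc) := by
  ext x
  constructor
  · rintro ⟨i, rfl⟩
    refine Fin.lastCases ?_ (fun j => ?_) i
    · left; rw [Fin.snoc_last]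
    · right; exact ⟨j, by simp⟩
  · rintro (rfl | ⟨j, rfl⟩)
    · exact ⟨Fin.last d, Fin.snoc_last _ _⟩
    · exact ⟨j.castSucc, by simp⟩

lemma norm_eq_one_of_sq {c : E} (h : ‖c‖ ^ 2 = 1) : ‖c‖ = 1 := by
  have h0 : (0:ℝ) ≤ ‖c‖ := norm_nonneg c
  nlinarith [sq_nonneg (‖c‖ - 1), sq_nonneg (‖c‖ + 1)]

lemma norm_one_of_inner_self {x : E} (h : ⟪x, x⟫ = 1) : ‖x‖ = 1 := by
  apply norm_eq_one_of_sq
  rw [← real_inner_self_eq_norm_sq]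
  exact h

lemma orthonormal_snoc_snoc {d : ℕ} {cc : Fin d → E} {p q : E}
    (hcc : Orthonormal ℝ cc) (hp : ⟪p, p⟫ = 1) (hq : ⟪q, q⟫ = 1) (hpq : ⟪p, q⟫ = 0)
    (hcp : ∀ i, ⟪cc i, p⟫ = 0) (hcq : ∀ i, ⟪cc i, q⟫ = 0) :
    Orthonormal ℝ (Fin.snoc (Fin.snoc cc p) q : Fin (d+2) → E) := by
  have hqp : ⟪q, p⟫ = 0 := by rw [real_inner_comm]; exact hpq
  have hpc : ∀ i, ⟪p, cc i⟫ = 0 := fun i => by rw [real_inner_comm]; exact hcp i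
  have hqc : ∀ i, ⟪q, cc i⟫ = 0 := fun i => by rw [real_inner_comm]; exact hcq i
  constructor
  · intro i
    refine Fin.lastCases ?_ (fun i' => ?_) i
    · rw [Fin.snoc_last]; exact norm_one_of_inner_self hq
    · rw [Fin.snoc_castSucc]
      refine Fin.lastCases ?_ (fun i'' => ?_) i'
      · rw [Fin.snoc_last]; exact norm_one_of_inner_self hp
      · rw [Fin.snoc_castSucc]; exact hcc.1 i''
  · intro i j hij
    revert hij
    refine Fin.lastCases ?_ (fun i' => ?_) i <;> refine Fin.lastCases ?_ (fun j' => ?_) j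
    · intro h; exact absurd rfl h
    · intro _
      rw [Fin.snoc_last, Fin.snoc_castSucc]
      refine Fin.lastCases ?_ (fun j'' => ?_) j'
      · rw [Fin.snoc_last]; exact hqp
      · rw [Fin.snoc_castSucc]; exact hqc j''
    · intro _
      rw [Fin.snoc_last, Fin.snoc_castSucc]
      refine Fin.lastCases ?_ (fun i'' => ?_) i'
      · rw [Fin.snoc_last]; exact hpq
      · rw [Fin.snoc_castSucc]; exact hcq i''
    · intro hij'
      rw [Fin.snoc_castSucc, Fin.snoc_castSucc]
      revert hij'
      refine Fin.lastCases ?_ (fun i'' => ?_) i' <;> refine Fin.lastCases ?_ (fun j'' => ?_) j'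
      · intro h; exact absurd rfl h
      · intro _
        rw [Fin.snoc_last, Fin.snoc_castSucc]; exact hpc j''
      · intro _
        rw [Fin.snoc_last, Fin.snoc_castSucc]; exact hcp i''
      · intro h
        rw [Fin.snoc_castSucc, Fin.snoc_castSucc]
        exact hcc.2 (fun hh => h (by rw [hh]))


set_option maxHeartbeats 2000000 in
lemma null_span (μ : Measure E) [IsProbabilityMeasure μ]
    (hsphere : μ (Metric.sphere (0:E) 1) = 1)
    (hinv : ∀ f : E ≃ₗᵢ[ℝ] E, μ.map f = μ) :
    ∀ d : ℕ, ∀ c : Fin d → E, d < N → Orthonormal ℝ c →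
      μ ((Submodule.span ℝ (Set.range c) : Submodule ℝ E) : Set E) = 0 := by
  have hcompl : μ ((Metric.sphere (0:E) 1)ᶜ) = 0 := by
    have hm : MeasurableSet (Metric.sphere (0:E) 1) :=
      Metric.isClosed_sphere.measurableSet
    rw [measure_compl hm (measure_ne_top μ _), hsphere, measure_univ, tsub_self]
  intro d
  induction d with
  | zero =>
    intro c hd hc
    have h1 : Set.range c = ∅ := by simp
    rw [h1, Submodule.span_empty]
    refine measure_mono_null ?_ hcompl
    intro w hw
    have : w = 0 := by simpa [Submodule.mem_bot] using hw
    simp [this]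
  | succ d ih =>
    intro c hd hc
    have hk2 : d + 2 ≤ N := hd
    obtain ⟨B, hB⟩ := extend_onb (le_of_lt hd) hc
    set e : E := B ⟨d + 1, hd⟩ with he_def
    set cc : Fin d → E := c ∘ Fin.castSucc with hcc_def
    set f : E := c (Fin.last d) with hf_def
    have hcsnoc : c = Fin.snoc cc f := by
      funext i
      refine Fin.lastCases ?_ (fun j => ?_) i
      · rw [Fin.snoc_last]
      · rw [Fin.snoc_castSucc]; rfl
    have hBc : ∀ i : Fin (d+1), c i = B ⟨(i:ℕ), lt_of_lt_of_le i.2 hd.le⟩ :=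
      fun i => (hB i).symm
    have hee : ⟪e, e⟫ = 1 := by
      rw [real_inner_self_eq_norm_sq, B.orthonormal.1]; norm_num
    have hce : ∀ i : Fin (d+1), ⟪c i, e⟫ = 0 := by
      intro i
      rw [hBc i, he_def]
      exact B.orthonormal.2 (by
        intro hcontra
        have : (i : ℕ) = d + 1 := congrArg Fin.val hcontra
        omega)
    have hfe : ⟪f, e⟫ = 0 := hce (Fin.last d)
    have hef : ⟪e, f⟫ = 0 := by rw [real_inner_comm]; exact hfe
    have hff : ⟪f, f⟫ = 1 := by
      rw [real_inner_self_eq_norm_sq, hc.1]; norm_num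
    have hccf : ∀ i : Fin d, ⟪cc i, f⟫ = 0 := by
      intro i
      exact hc.2 (Fin.castSucc_lt_last i).ne
    have hcce : ∀ i : Fin d, ⟪cc i, e⟫ = 0 := fun i => hce _
    have hcc_on : Orthonormal ℝ cc := hc.comp Fin.castSucc (Fin.castSucc_injective d)
    -- the rotation isometries
    set F : ℝ → E := fun α => Real.cos α • f + Real.sin α • e with hF
    have hFf : ∀ α : ℝ, ⟪F α, f⟫ = Real.cos α := by
      intro α
      simp only [hF, inner_add_left, real_inner_smul_left, hff, hef]
      ring
    have hFe : ∀ α : ℝ, ⟪F α, e⟫ = Real.sin α := by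
      intro α
      simp only [hF, inner_add_left, real_inner_smul_left, hfe, hee]
      ring
    have main : ∀ α : ℝ, ∃ g : E ≃ₗᵢ[ℝ] E, (∀ i : Fin d, g (cc i) = cc i) ∧
        g f = F α := by
      intro α
      set eα : E := -Real.sin α • f + Real.cos α • e with heα
      have hxfam : Orthonormal ℝ (Fin.snoc (Fin.snoc cc f) e : Fin (d+2) → E) :=
        orthonormal_snoc_snoc hcc_on hff hee hfe hccf hcce
      have hfafa : ⟪F α, F α⟫ = 1 := by
        simp only [hF, inner_add_left, inner_add_right, real_inner_smul_left,
          real_inner_smul_right, hff, hee, hfe, hef]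
        nlinarith [Real.sin_sq_add_cos_sq α]
      have heaea : ⟪eα, eα⟫ = 1 := by
        simp only [heα, inner_add_left, inner_add_right, real_inner_smul_left,
          real_inner_smul_right, hff, hee, hfe, hef]
        nlinarith [Real.sin_sq_add_cos_sq α]
      have hfaea : ⟪F α, eα⟫ = 0 := by
        simp only [hF, heα, inner_add_left, inner_add_right, real_inner_smul_left,
          real_inner_smul_right, hff, hee, hfe, hef]
        ring
      have hccfa : ∀ i : Fin d, ⟪cc i, F α⟫ = 0 := by
        intro i
        simp only [hF, inner_add_right, real_inner_smul_right, hccf i, hcce i]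
        ring
      have hccea : ∀ i : Fin d, ⟪cc i, eα⟫ = 0 := by
        intro i
        simp only [heα, inner_add_right, real_inner_smul_right, hccf i, hcce i]
        ring
      have hyfam : Orthonormal ℝ (Fin.snoc (Fin.snoc cc (F α)) eα : Fin (d+2) → E) :=
        orthonormal_snoc_snoc hcc_on hfafa heaea hfaea hccfa hccea
      obtain ⟨g, hg⟩ := ext_isometry' hk2 hxfam hyfam
      refine ⟨g, fun i => ?_, ?_⟩
      · have := hg (Fin.castSucc (Fin.castSucc i))
        simpa only [Fin.snoc_castSucc] using this
      · have := hg (Fin.castSucc (Fin.last d))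
        simpa only [Fin.snoc_castSucc, Fin.snoc_last] using this
    -- submodules
    set W' : Submodule ℝ E := Submodule.span ℝ (Set.range cc) with hW'def
    have hW'null : μ (W' : Set E) = 0 := ih cc (by omega) hcc_on
    set Wa : ℝ → Submodule ℝ E := fun α => W' ⊔ Submodule.span ℝ {F α} with hWa
    have hF0 : F 0 = f := by simp [hF]
    have hW0 : Submodule.span ℝ (Set.range c) = Wa 0 := by
      show _ = W' ⊔ Submodule.span ℝ {F 0}
      rw [hF0, hcsnoc, range_snoc, Submodule.span_insert, sup_comm, hW'def]
    have hmeasWa : ∀ α : ℝ, MeasurableSet ((Wa α : Set E)) := fun α =>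
      (Submodule.closed_of_finiteDimensional _).measurableSet
    have hkey : ∀ α : ℝ, μ ((Wa α : Set E)) = μ ((Wa 0 : Set E)) := by
      intro α
      obtain ⟨g, hgcc, hgf⟩ := main α
      have hmap : Submodule.map (g.toLinearEquiv : E →ₗ[ℝ] E) (Wa 0) = Wa α := by
        show Submodule.map _ (W' ⊔ Submodule.span ℝ {F 0}) = W' ⊔ Submodule.span ℝ {F α}
        rw [Submodule.map_sup]
        congr 1
        · rw [hW'def, Submodule.map_span]
          congr 1
          ext x
          simp only [Set.mem_image, Set.mem_range]
          constructor
          · rintro ⟨_, ⟨i, rfl⟩, rfl⟩; exact ⟨i, (hgcc i).symm⟩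
          · rintro ⟨i, rfl⟩; exact ⟨cc i, ⟨i, rfl⟩, hgcc i⟩
        · rw [Submodule.map_span, Set.image_singleton]
          congr 1
          rw [hF0]
          exact congrArg _ hgf  -- {g f} = {F α}
      have hset : (Wa α : Set E) = ⇑g '' ((Wa 0 : Set E)) := by
        rw [← hmap, Submodule.map_coe]; rfl
      have himg : ⇑g '' ((Wa 0 : Set E)) = ⇑g.symm ⁻¹' ((Wa 0 : Set E)) :=
        congrFun (Set.image_eq_preimage_of_inverse g.symm_apply_apply g.apply_symm_apply) _
      calc μ ((Wa α : Set E)) = μ (⇑g.symm ⁻¹' ((Wa 0 : Set E))) := by rw [hset, himg]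
        _ = (μ.map g.symm) ((Wa 0 : Set E)) :=
            (Measure.map_apply g.symm.continuous.measurable (hmeasWa 0)).symm
        _ = μ ((Wa 0 : Set E)) := by rw [hinv g.symm]
    -- representation of elements of Wa α
    have hrep : ∀ α : ℝ, ∀ v ∈ Wa α, ∃ t : ℝ, v - t • F α ∈ W' ∧
        ⟪v, e⟫ = t * Real.sin α ∧ ⟪v, f⟫ = t * Real.cos α := by
      intro α v hv
      rw [hWa] at hv
      obtain ⟨z, hz, y, hy, rfl⟩ := Submodule.mem_sup.1 hv
      obtain ⟨t, rfl⟩ := Submodule.mem_span_singleton.1 hy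
      have hze : ⟪z, e⟫ = 0 := by
        refine inner_eq_zero_of_mem_span ?_ hz
        rintro x ⟨i, rfl⟩; exact hcce i
      have hzf : ⟪z, f⟫ = 0 := by
        refine inner_eq_zero_of_mem_span ?_ hz
        rintro x ⟨i, rfl⟩; exact hccf i
      refine ⟨t, by simpa using hz, ?_, ?_⟩
      · rw [inner_add_left, hze, real_inner_smul_left, hFe]; ring
      · rw [inner_add_left, hzf, real_inner_smul_left, hFf]; ring
    -- disjointness
    have hdisj : ∀ α β : ℝ, α ∈ Set.Ioo 0 (Real.pi/2) → β ∈ Set.Ioo 0 (Real.pi/2) →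
        α ≠ β → ∀ v, v ∈ Wa α → v ∈ Wa β → v ∈ W' := by
      intro α β hα hβ hαβ v hvα hvβ
      obtain ⟨t, hzα, hveα, hvfα⟩ := hrep α v hvα
      obtain ⟨u, hzβ, hveβ, hvfβ⟩ := hrep β v hvβ
      have h1 : t * Real.sin α = u * Real.sin β := by rw [← hveα, ← hveβ]
      have h2 : t * Real.cos α = u * Real.cos β := by rw [← hvfα, ← hvfβ]
      have ht : t = 0 := by
        by_contra ht0
        have hs : t * Real.sin (α - β) = 0 := by
          rw [Real.sin_sub]
          linear_combination Real.cos β * h1 - Real.sin β * h2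
        have hsin : Real.sin (α - β) = 0 := by
          rcases mul_eq_zero.1 hs with h | h
          · exact absurd h ht0
          · exact h
        have hbound1 : -Real.pi < α - β := by
          have := Real.pi_pos
          obtain ⟨hα1, hα2⟩ := hα
          obtain ⟨hβ1, hβ2⟩ := hβ
          linarith
        have hbound2 : α - β < Real.pi := by
          have := Real.pi_pos
          obtain ⟨hα1, hα2⟩ := hα
          obtain ⟨hβ1, hβ2⟩ := hβ
          linarith
        have : α - β = 0 := by
          rwa [Real.sin_eq_zero_iff_of_lt_of_lt hbound1 hbound2] at hsin
        exact hαβ (by linarith)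
      rw [ht] at hzα
      simpa using hzα
    -- countable family of disjoint rotated copies
    set as : ℕ → ℝ := fun n => Real.pi / (2 * (n + 2)) with has
    have has_mem : ∀ n : ℕ, as n ∈ Set.Ioo 0 (Real.pi/2) := by
      intro n
      constructor
      · have := Real.pi_pos
        positivity
      · rw [has]
        apply div_lt_div_of_pos_left Real.pi_pos (by norm_num)
        have : (2:ℝ) ≤ (n:ℝ) + 2 := by
          have : (0:ℝ) ≤ (n:ℝ) := Nat.cast_nonneg n
          linarith
        linarith
    have has_inj : Function.Injective as := by
      have hanti : StrictAnti as := by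
        intro m n hmn
        rw [has]
        apply div_lt_div_of_pos_left Real.pi_pos (by positivity)
        have : (m:ℝ) < (n:ℝ) := by exact_mod_cast hmn
        linarith
      exact hanti.injective
    set A : ℕ → Set E := fun n => ((Wa (as n) : Set E)) \ (W' : Set E) with hA
    have hAmeas : ∀ n, MeasurableSet (A n) := fun n =>
      (hmeasWa (as n)).diff (Submodule.closed_of_finiteDimensional _).measurableSet
    have hApair : Pairwise (Function.onFun Disjoint A) := by
      intro m n hmn
      rw [Function.onFun, Set.disjoint_left]
      intro v hvm hvn
      exact hvn.2 (hdisj _ _ (has_mem m) (has_mem n)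
        (fun h => hmn (has_inj h)) v hvm.1 hvn.1)
    have hAmu : ∀ n, μ (A n) = μ ((Wa 0 : Set E)) := by
      intro n
      rw [hA]
      rw [measure_diff_null hW'null]
      exact hkey (as n)
    rw [hW0]
    by_contra h0
    have htop : (⊤ : ENNReal) ≤ 1 := by
      calc (⊤ : ENNReal) = ∑' _ : ℕ, μ ((Wa 0 : Set E)) :=
            (ENNReal.tsum_const_eq_top_of_ne_zero h0).symm
        _ = ∑' n : ℕ, μ (A n) := tsum_congr (fun n => (hAmu n).symm)
        _ = μ (⋃ n, A n) := (measure_iUnion hApair hAmeas).symm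
        _ ≤ 1 := prob_le_one
    simp at htop


lemma null_submodule (μ : Measure E) [IsProbabilityMeasure μ]
    (hsphere : μ (Metric.sphere (0:E) 1) = 1)
    (hinv : ∀ f : E ≃ₗᵢ[ℝ] E, μ.map f = μ)
    (W : Submodule ℝ E) (hW : W ≠ ⊤) : μ (W : Set E) = 0 := by
  set b := stdOrthonormalBasis ℝ W with hb
  set x : Fin (finrank ℝ W) → E := fun i => (b i : E) with hxdef
  have hx_on : Orthonormal ℝ x := by
    rw [orthonormal_iff_ite]
    intro i j
    have h := orthonormal_iff_ite.1 b.orthonormal i j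
    rw [← h]
    rfl
  have hspan : Submodule.span ℝ (Set.range x) = W := by
    have h1 : Set.range x = (W.subtype) '' Set.range b := by
      rw [← Set.range_comp]; rfl
    have h2 : Submodule.span ℝ (Set.range ⇑b) = ⊤ := by
      rw [← b.coe_toBasis]; exact b.toBasis.span_eq
    rw [h1, Submodule.span_image, h2, Submodule.map_top, Submodule.range_subtype]
  have hlt : finrank ℝ W < N := by
    have h := Submodule.finrank_lt hW (K := ℝ) (V := E)
    simpa using h
  rw [← hspan]
  exact null_span μ hsphere hinv _ x hlt hx_on

lemma null_hyperplane (μ : Measure E) [IsProbabilityMeasure μ]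
    (hsphere : μ (Metric.sphere (0:E) 1) = 1)
    (hinv : ∀ f : E ≃ₗᵢ[ℝ] E, μ.map f = μ)
    (a : E) (ha : a ≠ 0) : μ {w : E | ⟪a, w⟫ = 0} = 0 := by
  have hset : {w : E | ⟪a, w⟫ = 0} = (((ℝ ∙ a)ᗮ : Submodule ℝ E) : Set E) := by
    ext w
    simp [Submodule.mem_orthogonal_singleton_iff_inner_right]
  rw [hset]
  apply null_submodule μ hsphere hinv
  intro htop
  have h := (Submodule.orthogonal_eq_top_iff _).1 htop
  exact ha (Submodule.span_singleton_eq_bot.1 h)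

lemma half_space (μ : Measure E) [IsProbabilityMeasure μ]
    (hsphere : μ (Metric.sphere (0:E) 1) = 1)
    (hinv : ∀ f : E ≃ₗᵢ[ℝ] E, μ.map f = μ)
    (a : E) (ha : a ≠ 0) : μ {w : E | 0 < ⟪a, w⟫} = 2⁻¹ := by
  have hcont : Continuous (fun w : E => ⟪a, w⟫) :=
    Continuous.inner continuous_const continuous_id
  have hm1 : MeasurableSet {w : E | 0 < ⟪a, w⟫} :=
    (isOpen_lt continuous_const hcont).measurableSet
  have hm2 : MeasurableSet {w : E | ⟪a, w⟫ < 0} :=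
    (isOpen_lt hcont continuous_const).measurableSet
  have hm3 : MeasurableSet {w : E | ⟪a, w⟫ = 0} :=
    (isClosed_eq hcont continuous_const).measurableSet
  have hzero : μ {w : E | ⟪a, w⟫ = 0} = 0 := null_hyperplane μ hsphere hinv a ha
  have hneg : μ {w : E | ⟪a, w⟫ < 0} = μ {w : E | 0 < ⟪a, w⟫} := by
    obtain ⟨T, hT⟩ : ∃ T : E ≃ₗᵢ[ℝ] E, ∀ w : E, T w = -w :=
      ⟨LinearIsometryEquiv.neg ℝ, fun w => rfl⟩
    have hpre : T ⁻¹' {w : E | ⟪a, w⟫ < 0} = {w : E | 0 < ⟪a, w⟫} := by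
      ext w
      simp [hT, inner_neg_right]
    calc μ {w : E | ⟪a, w⟫ < 0}
        = μ.map T {w : E | ⟪a, w⟫ < 0} := by rw [hinv]
      _ = μ (T ⁻¹' {w : E | ⟪a, w⟫ < 0}) :=
          Measure.map_apply T.continuous.measurable hm2
      _ = μ {w : E | 0 < ⟪a, w⟫} := by rw [hpre]
  have hunion : {w : E | 0 < ⟪a, w⟫} ∪ ({w : E | ⟪a, w⟫ < 0} ∪ {w : E | ⟪a, w⟫ = 0})
      = Set.univ := by
    ext w
    simp only [Set.mem_union, Set.mem_setOf_eq, Set.mem_univ, iff_true]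
    rcases lt_trichotomy (⟪a, w⟫) 0 with h | h | h
    · right; left; exact h
    · right; right; exact h
    · left; exact h
  have hdisj : Disjoint {w : E | 0 < ⟪a, w⟫} ({w : E | ⟪a, w⟫ < 0} ∪ {w : E | ⟪a, w⟫ = 0}) := by
    rw [Set.disjoint_left]
    rintro w hw (h | h) <;> rw [Set.mem_setOf_eq] at hw h <;> linarith
  have h1 : μ {w : E | 0 < ⟪a, w⟫} + μ ({w : E | ⟪a, w⟫ < 0} ∪ {w : E | ⟪a, w⟫ = 0}) = 1 := by
    rw [← measure_union hdisj (hm2.union hm3), hunion, measure_univ]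
  have hsplit : μ ({w : E | ⟪a, w⟫ < 0} ∪ {w : E | ⟪a, w⟫ = 0}) = μ {w : E | ⟪a, w⟫ < 0} :=
    le_antisymm ((measure_union_le _ _).trans (by rw [hzero, add_zero]))
      (measure_mono Set.subset_union_left)
  rw [hsplit, hneg] at h1
  have h2 : 2 * μ {w : E | 0 < ⟪a, w⟫} = 1 := by rw [two_mul]; exact h1
  calc μ {w : E | 0 < ⟪a, w⟫} = 2⁻¹ * (2 * μ {w : E | 0 < ⟪a, w⟫}) := by
        rw [← mul_assoc, ENNReal.inv_mul_cancel (by norm_num) (by norm_num), one_mul]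
    _ = 2⁻¹ := by rw [h2, mul_one]

def S (a b : E) : Set E := {w : E | 0 ≤ ⟪a, w⟫ ∧ ⟪b, w⟫ < 0}

lemma measurableSet_S (a b : E) : MeasurableSet (S a b) := by
  have h1 : MeasurableSet {w : E | 0 ≤ ⟪a, w⟫} :=
    (isClosed_le continuous_const (Continuous.inner continuous_const continuous_id)).measurableSet
  have h2 : MeasurableSet {w : E | ⟪b, w⟫ < 0} :=
    (isOpen_lt (Continuous.inner continuous_const continuous_id) continuous_const).measurableSet
  exact h1.inter h2

lemma gs_facts {a b : E} (ha : ‖a‖ = 1) (hb : ‖b‖ = 1) (hlt : |⟪a, b⟫| < 1) :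
    ‖(Real.sqrt (1 - ⟪a, b⟫ ^ 2))⁻¹ • (b - ⟪a, b⟫ • a)‖ = 1 ∧
    ⟪a, (Real.sqrt (1 - ⟪a, b⟫ ^ 2))⁻¹ • (b - ⟪a, b⟫ • a)⟫ = 0 ∧
    b = ⟪a, b⟫ • a +
      Real.sqrt (1 - ⟪a, b⟫ ^ 2) • ((Real.sqrt (1 - ⟪a, b⟫ ^ 2))⁻¹ • (b - ⟪a, b⟫ • a)) := by
  set t := ⟪a, b⟫ with ht
  have htsq : t ^ 2 < 1 := by
    nlinarith [hlt, abs_nonneg t, sq_abs t]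
  have hpos : (0:ℝ) < 1 - t ^ 2 := by linarith
  set r := Real.sqrt (1 - t ^ 2) with hr
  have hr2 : r ^ 2 = 1 - t ^ 2 := Real.sq_sqrt hpos.le
  have hrpos : 0 < r := Real.sqrt_pos.2 hpos
  have haa : ⟪a, a⟫ = 1 := by
    rw [real_inner_self_eq_norm_sq, ha]; norm_num
  have hba : ⟪b, a⟫ = t := by rw [ht]; exact real_inner_comm a b
  have hbb : ⟪b, b⟫ = 1 := by
    rw [real_inner_self_eq_norm_sq, hb]; norm_num
  have hsubsq : ⟪b - t • a, b - t • a⟫ = 1 - t ^ 2 := by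
    rw [inner_sub_left, inner_sub_right, inner_sub_right, real_inner_smul_left,
      real_inner_smul_left, real_inner_smul_right, real_inner_smul_right, haa, hba, hbb, ← ht]
    ring
  refine ⟨?_, ?_, ?_⟩
  · apply norm_eq_one_of_sq
    rw [← real_inner_self_eq_norm_sq, real_inner_smul_left, real_inner_smul_right, hsubsq]
    have : r ≠ 0 := hrpos.ne'
    field_simp
    rw [← hr2]
  · rw [real_inner_smul_right, inner_sub_right, real_inner_smul_right, haa, ← ht]
    ring
  · rw [smul_inv_smul₀ hrpos.ne']
    abel

lemma measure_S_congr (hN : 2 ≤ N) (μ : Measure E)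
    (hinv : ∀ f : E ≃ₗᵢ[ℝ] E, μ.map f = μ)
    {a b a' b' : E} (ha : ‖a‖ = 1) (hb : ‖b‖ = 1) (ha' : ‖a'‖ = 1) (hb' : ‖b'‖ = 1)
    (hip : ⟪a, b⟫ = ⟪a', b'⟫) (hlt : |⟪a, b⟫| < 1) :
    μ (S a b) = μ (S a' b') := by
  obtain ⟨hc1, hc2, hc3⟩ := gs_facts ha hb hlt
  obtain ⟨hc1', hc2', hc3'⟩ := gs_facts ha' hb' (hip ▸ hlt)
  set c := (Real.sqrt (1 - ⟪a, b⟫ ^ 2))⁻¹ • (b - ⟪a, b⟫ • a) with hcdef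
  set c' := (Real.sqrt (1 - ⟪a', b'⟫ ^ 2))⁻¹ • (b' - ⟪a', b'⟫ • a') with hcdef'
  have haa : ⟪a, a⟫ = 1 := by rw [real_inner_self_eq_norm_sq, ha]; norm_num
  have hcc : ⟪c, c⟫ = 1 := by rw [real_inner_self_eq_norm_sq, hc1]; norm_num
  have hca : ⟪c, a⟫ = 0 := by rw [real_inner_comm]; exact hc2
  have haa' : ⟪a', a'⟫ = 1 := by rw [real_inner_self_eq_norm_sq, ha']; norm_num
  have hcc' : ⟪c', c'⟫ = 1 := by rw [real_inner_self_eq_norm_sq, hc1']; norm_num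
  have hca' : ⟪c', a'⟫ = 0 := by rw [real_inner_comm]; exact hc2'
  have hx : Orthonormal ℝ ![a, c] := by
    rw [orthonormal_iff_ite]
    intro i j
    fin_cases i <;> fin_cases j <;> simp [haa, hcc, hc2, hca, hc1, ha]
  have hy : Orthonormal ℝ ![a', c'] := by
    rw [orthonormal_iff_ite]
    intro i j
    fin_cases i <;> fin_cases j <;> simp [haa', hcc', hc2', hca', hc1', ha']
  obtain ⟨g, hg⟩ := ext_isometry' hN hx hy
  have hga : g a = a' := by simpa using hg 0
  have hgc : g c = c' := by simpa using hg 1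
  have hgb : g b = b' := by
    rw [hc3, map_add, g.map_smul, g.map_smul, hga, hgc, hip]
    exact hc3'.symm
  have hpre : g ⁻¹' (S a' b') = S a b := by
    ext w
    have h1 : ⟪a', g w⟫ = ⟪a, w⟫ := by rw [← hga, g.inner_map_map]
    have h2 : ⟪b', g w⟫ = ⟪b, w⟫ := by rw [← hgb, g.inner_map_map]
    simp only [S, mem_preimage, mem_setOf_eq, h1, h2]
  have : μ (S a' b') = μ (S a b) := by
    calc μ (S a' b') = μ.map g (S a' b') := by rw [hinv g]
      _ = μ (g ⁻¹' (S a' b')) :=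
          Measure.map_apply g.continuous.measurable (measurableSet_S a' b')
      _ = μ (S a b) := by rw [hpre]
  exact this.symm

open Real in
lemma linear_of_additive (G : ℝ → ℝ)
    (hadd : ∀ s θ : ℝ, 0 < s → s < θ → θ ≤ π → G θ = G s + G (θ - s))
    (h0 : G 0 = 0) (hpi : G π = 1/2)
    (hmono : ∀ s θ : ℝ, 0 ≤ s → s ≤ θ → θ ≤ π → G s ≤ G θ) :
    ∀ θ : ℝ, 0 ≤ θ → θ ≤ π → G θ = θ / (2*π) := by
  have hπ := Real.pi_pos
  have hstep : ∀ n k : ℕ, ((k:ℝ)+1) * (π/(n+1)) ≤ π →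
      G (((k:ℝ)+1) * (π/(n+1))) = ((k:ℝ)+1) * G (π/(n+1)) := by
    intro n k
    induction k with
    | zero => intro _; norm_num
    | succ k ihk =>
      intro hle
      have hx : 0 < π/((n:ℝ)+1) := by positivity
      have hle' : ((k:ℝ)+1) * (π/(n+1)) ≤ π := by
        push_cast at hle
        have hh : ((k:ℝ)+1) * (π/(n+1)) + (π/(n+1)) = ((k:ℝ)+1+1) * (π/(n+1)) := by ring
        linarith [hx, hle]
      have hs : (0:ℝ) < ((k:ℝ)+1) * (π/(n+1)) := by positivity
      have hst : ((k:ℝ)+1) * (π/(n+1)) < ((k:ℝ)+1+1) * (π/(n+1)) := by nlinarith [hx]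
      have := hadd (((k:ℝ)+1) * (π/(n+1))) (((k:ℝ)+1+1) * (π/(n+1))) hs hst (by push_cast at hle ⊢; linarith [hle])
      push_cast
      push_cast at this ihk
      have hdiff : ((k:ℝ)+1+1) * (π/(n+1)) - ((k:ℝ)+1) * (π/(n+1)) = π/(n+1) := by ring
      rw [hdiff] at this
      rw [this, ihk hle']
      ring
  have hGx : ∀ n : ℕ, G (π/((n:ℝ)+1)) = 1/(2*((n:ℝ)+1)) := by
    intro n
    have h1 : ((n:ℝ)+1) * (π/(n+1)) = π := by field_simp
    have := hstep n n (by rw [h1])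
    rw [h1, hpi] at this
    have hn1 : ((n:ℝ)+1) ≠ 0 := by positivity
    field_simp at this ⊢
    linarith [this]
  have hval : ∀ n k : ℕ, (k:ℝ) ≤ (n:ℝ)+1 → G ((k:ℝ) * (π/(n+1))) = (k:ℝ)/(2*((n:ℝ)+1)) := by
    intro n k hk
    cases k with
    | zero => simpa using h0
    | succ k =>
      have hle : ((k:ℝ)+1) * (π/(n+1)) ≤ π := by
        have hx : 0 < π/((n:ℝ)+1) := by positivity
        push_cast at hk
        calc ((k:ℝ)+1) * (π/(n+1)) ≤ ((n:ℝ)+1) * (π/(n+1)) := by nlinarith [hx]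
          _ = π := by field_simp
      have := hstep n k hle
      push_cast
      rw [this, hGx n]
      ring
  intro θ hθ0 hθπ
  rcases eq_or_lt_of_le hθπ with rfl | hθlt
  · rw [hpi]
    field_simp
  -- θ < π case
  have hcrux : ∀ n : ℕ, |G θ - θ/(2*π)| ≤ 1/((n:ℝ)+1) := by
    intro n
    set x := π/((n:ℝ)+1) with hxdef
    have hx : 0 < x := by positivity
    set k := Nat.floor (θ/x) with hk
    have hθx0 : 0 ≤ θ/x := by positivity
    have hk1 : (k:ℝ) * x ≤ θ := by
      have := Nat.floor_le hθx0
      rw [← hk] at this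
      calc (k:ℝ) * x ≤ (θ/x) * x := by nlinarith
        _ = θ := by field_simp
    have hk2 : θ < ((k:ℝ)+1) * x := by
      have := Nat.lt_floor_add_one (θ/x)
      rw [← hk] at this
      calc θ = (θ/x) * x := by field_simp
        _ < ((k:ℝ)+1) * x := by nlinarith
    have hk3 : (k:ℝ)+1 ≤ (n:ℝ)+1 := by
      have h1 : (k:ℝ) ≤ θ/x := by
        rw [hk]; exact Nat.floor_le hθx0
      have h2 : θ/x < (n:ℝ)+1 := by
        rw [div_lt_iff₀ hx]
        calc θ < π := hθlt
          _ = ((n:ℝ)+1) * x := by rw [hxdef]; field_simp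
      have : (k:ℝ) < (n:ℝ)+1 := lt_of_le_of_lt h1 h2
      have hkn : k < n+1 := by exact_mod_cast this
      have : k ≤ n := by omega
      push_cast
      have : (k:ℝ) ≤ (n:ℝ) := by exact_mod_cast this
      linarith
    have hkx_pi : ((k:ℝ)+1) * x ≤ π := by
      calc ((k:ℝ)+1) * x ≤ ((n:ℝ)+1) * x := by nlinarith
        _ = π := by rw [hxdef]; field_simp
    have hG1 : G ((k:ℝ) * x) ≤ G θ :=
      hmono _ _ (by positivity) hk1 hθπ
    have hG2 : G θ ≤ G (((k:ℝ)+1) * x) :=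
      hmono _ _ hθ0 hk2.le hkx_pi
    have hv1 : G ((k:ℝ) * x) = (k:ℝ)/(2*((n:ℝ)+1)) := hval n k (by linarith)
    have hv2 : G (((k:ℝ)+1) * x) = ((k:ℝ)+1)/(2*((n:ℝ)+1)) := by
      have := hval n (k+1) (by push_cast; linarith)
      push_cast at this
      exact this
    have hn1 : ((n:ℝ)+1) > 0 := by positivity
    have hc1 : (k:ℝ)/(2*((n:ℝ)+1)) ≤ θ/(2*π) := by
      rw [div_le_div_iff₀ (by positivity) (by positivity)]
      have h := mul_le_mul_of_nonneg_right hk1 (le_of_lt hn1)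
      have hsimp : ((k:ℝ) * x) * ((n:ℝ)+1) = (k:ℝ) * π := by
        rw [hxdef]; field_simp
      rw [hsimp] at h
      linarith
    have hc2 : θ/(2*π) ≤ ((k:ℝ)+1)/(2*((n:ℝ)+1)) := by
      rw [div_le_div_iff₀ (by positivity) (by positivity)]
      have h := mul_le_mul_of_nonneg_right hk2.le (le_of_lt hn1)
      have hsimp : (((k:ℝ)+1) * x) * ((n:ℝ)+1) = ((k:ℝ)+1) * π := by
        rw [hxdef]; field_simp
      rw [hsimp] at h
      linarith
    rw [abs_le]
    constructor
    · have : (k:ℝ)/(2*((n:ℝ)+1)) ≥ ((k:ℝ)+1)/(2*((n:ℝ)+1)) - 1/((n:ℝ)+1) := by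
        rw [ge_iff_le, div_sub_div _ _ (by positivity : (2*((n:ℝ)+1)) ≠ 0) (by positivity : ((n:ℝ)+1) ≠ 0)]
        rw [div_le_div_iff₀ (by positivity) (by positivity)]
        ring_nf
        nlinarith [sq_nonneg ((n:ℝ)+1)]
      rw [hv1] at hG1
      linarith
    · rw [hv2] at hG2
      have : ((k:ℝ)+1)/(2*((n:ℝ)+1)) - (k:ℝ)/(2*((n:ℝ)+1)) ≤ 1/((n:ℝ)+1) := by
        rw [div_sub_div_same]
        rw [div_le_div_iff₀ (by positivity) (by positivity)]
        ring_nf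
        nlinarith [sq_nonneg ((n:ℝ)+1)]
      linarith
  by_contra hne
  have hpos : 0 < |G θ - θ/(2*π)| := abs_pos.2 (sub_ne_zero.2 hne)
  obtain ⟨n, hn⟩ := exists_nat_one_div_lt hpos
  have := hcrux n
  linarith


lemma inner_single_single_ne {i j : Fin N} (hij : i ≠ j) :
    ⟪(EuclideanSpace.single i (1:ℝ) : E), (EuclideanSpace.single j (1:ℝ) : E)⟫ = 0 := by
  rw [EuclideanSpace.inner_single_left, EuclideanSpace.single_apply]
  simp [hij]

lemma inner_single_single_eq (i : Fin N) :
    ⟪(EuclideanSpace.single i (1:ℝ) : E), (EuclideanSpace.single i (1:ℝ) : E)⟫ = 1 := by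
  rw [EuclideanSpace.inner_single_left, EuclideanSpace.single_apply]
  simp

lemma sign_mul_iff {c x : ℝ} (hc : 0 < c) : (0 ≤ c * x ↔ 0 ≤ x) := by
  constructor
  · intro h
    by_contra hx
    exact absurd h (not_le.2 (mul_neg_of_pos_of_neg hc (not_le.1 hx)))
  · intro h
    exact mul_nonneg hc.le h

lemma cos_abs_lt_one {x : ℝ} (h0 : 0 < x) (hπ : x < Real.pi) : |Real.cos x| < 1 := by
  rw [abs_lt]
  constructor
  · have h := Real.strictAntiOn_cos ⟨h0.le, hπ.le⟩ ⟨Real.pi_pos.le, le_refl _⟩ hπ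
    rw [Real.cos_pi] at h
    linarith
  · have h := Real.strictAntiOn_cos ⟨le_refl (0:ℝ), Real.pi_pos.le⟩ ⟨h0.le, hπ.le⟩ h0
    rw [Real.cos_zero] at h
    linarith

set_option maxHeartbeats 2000000 in
lemma measure_S_eq (hN : 2 ≤ N) (μ : Measure E) [IsProbabilityMeasure μ]
    (hsphere : μ (Metric.sphere (0:E) 1) = 1)
    (hinv : ∀ f : E ≃ₗᵢ[ℝ] E, μ.map f = μ)
    {a b : E} (ha : ‖a‖ = 1) (hb : ‖b‖ = 1) (hlt : |⟪a, b⟫| < 1) :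
    μ (S a b) = ENNReal.ofReal (Real.arccos ⟪a, b⟫ / (2 * Real.pi)) := by
  have hπ := Real.pi_pos
  set E1 : E := EuclideanSpace.single (⟨0, by omega⟩ : Fin N) (1:ℝ) with hE1
  set E2 : E := EuclideanSpace.single (⟨1, by omega⟩ : Fin N) (1:ℝ) with hE2
  have hne : (⟨0, by omega⟩ : Fin N) ≠ (⟨1, by omega⟩ : Fin N) := by
    simp [Fin.ext_iff]
  have h11 : ⟪E1, E1⟫ = 1 := inner_single_single_eq _
  have h12 : ⟪E1, E2⟫ = 0 := inner_single_single_ne hne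
  have h21 : ⟪E2, E1⟫ = 0 := by rw [real_inner_comm]; exact h12
  have h22 : ⟪E2, E2⟫ = 1 := inner_single_single_eq _
  set γ : ℝ → E := fun t => Real.cos t • E1 + Real.sin t • E2 with hγ
  have hγγ : ∀ s t : ℝ, ⟪γ s, γ t⟫ = Real.cos (s - t) := by
    intro s t
    simp only [hγ, inner_add_left, inner_add_right, real_inner_smul_left,
      real_inner_smul_right, h11, h12, h21, h22]
    rw [Real.cos_sub]
    ring
  have hγunit : ∀ t, ‖γ t‖ = 1 := by
    intro t
    apply norm_one_of_inner_self
    rw [hγγ, sub_self, Real.cos_zero]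
  have hγ0ne : γ 0 ≠ 0 := by
    intro h
    have h2 := hγunit 0
    rw [h, norm_zero] at h2
    norm_num at h2
  set g : ℝ → ENNReal := fun θ => μ (S (γ 0) (γ θ)) with hg
  have habs : ∀ s t : ℝ, 0 < t - s → t - s < Real.pi → |⟪γ s, γ t⟫| < 1 := by
    intro s t h1 h2
    rw [hγγ, ← Real.cos_neg, neg_sub]
    exact cos_abs_lt_one h1 h2
  have hangle : ∀ s t : ℝ, 0 < t - s → t - s < Real.pi →
      μ (S (γ s) (γ t)) = g (t - s) := by
    intro s t h1 h2
    refine measure_S_congr hN μ hinv (hγunit s) (hγunit t) (hγunit 0) (hγunit (t - s))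
      ?_ (habs s t h1 h2)
    rw [hγγ, hγγ]
    congr 1
    ring
  have hcomb : ∀ s θ : ℝ, Real.sin θ • γ s = Real.sin (θ - s) • γ 0 + Real.sin s • γ θ := by
    intro s θ
    simp only [hγ]
    match_scalars
    · rw [Real.sin_sub, Real.cos_zero]
      ring
    · rw [Real.sin_sub, Real.sin_zero]
      ring
  have hinner_comb : ∀ s θ : ℝ, ∀ w : E,
      Real.sin θ * ⟪γ s, w⟫ = Real.sin (θ - s) * ⟪γ 0, w⟫ + Real.sin s * ⟪γ θ, w⟫ := by
    intro s θ w
    have h := congrArg (fun z : E => ⟪z, w⟫) (hcomb s θ)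
    simpa only [inner_add_left, real_inner_smul_left] using h
  have hγpi : γ Real.pi = -γ 0 := by
    simp only [hγ, Real.cos_pi, Real.sin_pi, Real.cos_zero, Real.sin_zero]
    module
  have hSpi : S (γ 0) (γ Real.pi) = {w : E | 0 < ⟪γ 0, w⟫} := by
    ext w
    simp only [S, Set.mem_setOf_eq, hγpi, inner_neg_left]
    constructor
    · rintro ⟨h1, h2⟩; linarith
    · intro h; exact ⟨h.le, by linarith⟩
  have hgpi : g Real.pi = 2⁻¹ := by
    show μ (S (γ 0) (γ Real.pi)) = 2⁻¹
    rw [hSpi]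
    exact half_space μ hsphere hinv (γ 0) hγ0ne
  have hg0 : g 0 = 0 := by
    show μ (S (γ 0) (γ 0)) = 0
    have hS0 : S (γ 0) (γ 0) = ∅ := by
      rw [Set.eq_empty_iff_forall_notMem]
      rintro w ⟨h1, h2⟩
      linarith
    rw [hS0]
    exact measure_empty
  have hadd : ∀ s θ : ℝ, 0 < s → s < θ → θ ≤ Real.pi → g θ = g s + g (θ - s) := by
    intro s θ hs hsθ hθπ
    have hss : 0 < Real.sin s := Real.sin_pos_of_pos_of_lt_pi hs (lt_of_lt_of_le hsθ hθπ)
    have hsθs : 0 < Real.sin (θ - s) :=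
      Real.sin_pos_of_pos_of_lt_pi (by linarith) (by linarith)
    have hdisj : Disjoint (S (γ 0) (γ s)) (S (γ s) (γ θ)) := by
      rw [Set.disjoint_left]
      rintro w ⟨_, h2⟩ ⟨h3, _⟩
      linarith
    rcases eq_or_lt_of_le hθπ with rfl | hθlt
    · -- boundary case θ = π
      have hU1 : S (γ s) (γ Real.pi) ⊆ {w : E | 0 < ⟪γ 0, w⟫} := by
        rintro w ⟨h1, h2⟩
        rw [hγpi, inner_neg_left] at h2
        have : (0:ℝ) < ⟪γ 0, w⟫ := by linarith
        exact this
      have hU3 : S (γ 0) (γ s) ⊆ {w : E | 0 < ⟪γ 0, w⟫} ∪ {w : E | ⟪γ 0, w⟫ = 0} := by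
        rintro w ⟨h1, _⟩
        rcases eq_or_lt_of_le h1 with h | h
        · right; exact h.symm
        · left; exact h
      have hU2 : {w : E | 0 < ⟪γ 0, w⟫} ⊆ S (γ 0) (γ s) ∪ S (γ s) (γ Real.pi) := by
        intro w hw
        rw [Set.mem_setOf_eq] at hw
        by_cases hc : ⟪γ s, w⟫ < 0
        · left; exact ⟨hw.le, hc⟩
        · right
          refine ⟨not_lt.1 hc, ?_⟩
          rw [hγpi, inner_neg_left]
          linarith
      have hzero := null_hyperplane μ hsphere hinv (γ 0) hγ0ne
      have hμU : μ (S (γ 0) (γ s) ∪ S (γ s) (γ Real.pi)) = g Real.pi := by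
        show _ = μ (S (γ 0) (γ Real.pi))
        rw [hSpi]
        apply le_antisymm
        · calc μ (S (γ 0) (γ s) ∪ S (γ s) (γ Real.pi))
              ≤ μ ({w : E | 0 < ⟪γ 0, w⟫} ∪ {w : E | ⟪γ 0, w⟫ = 0}) := by
                apply measure_mono
                apply Set.union_subset
                · exact hU3
                · exact hU1.trans Set.subset_union_left
            _ ≤ μ {w : E | 0 < ⟪γ 0, w⟫} + μ {w : E | ⟪γ 0, w⟫ = 0} := measure_union_le _ _
            _ = μ {w : E | 0 < ⟪γ 0, w⟫} := by rw [hzero, add_zero]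
        · exact measure_mono hU2
      rw [show g Real.pi = μ (S (γ 0) (γ Real.pi)) from rfl] at hμU ⊢
      rw [← hμU, measure_union hdisj (measurableSet_S _ _)]
      congr 1
      exact hangle s Real.pi (by linarith) (by linarith)
    · -- interior case
      have hsθ2 : 0 < Real.sin θ := Real.sin_pos_of_pos_of_lt_pi (by linarith) hθlt
      have hset : S (γ 0) (γ θ) = S (γ 0) (γ s) ∪ S (γ s) (γ θ) := by
        apply Set.Subset.antisymm
        · rintro w ⟨h1, h2⟩
          by_cases hc : ⟪γ s, w⟫ < 0
          · left; exact ⟨h1, hc⟩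
          · right; exact ⟨not_lt.1 hc, h2⟩
        · apply Set.union_subset
          · rintro w ⟨h1, h2⟩
            have hid := hinner_comb s θ w
            refine ⟨h1, ?_⟩
            have hL : Real.sin θ * ⟪γ s, w⟫ < 0 := mul_neg_of_pos_of_neg hsθ2 h2
            have hR1 : 0 ≤ Real.sin (θ - s) * ⟪γ 0, w⟫ := mul_nonneg hsθs.le h1
            have hprod : Real.sin s * ⟪γ θ, w⟫ < 0 := by linarith
            by_contra hcon
            exact absurd hprod (not_lt.2 (mul_nonneg hss.le (not_lt.1 hcon)))
          · rintro w ⟨h1, h2⟩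
            have hid := hinner_comb s θ w
            refine ⟨?_, h2⟩
            have hR1 : 0 ≤ Real.sin θ * ⟪γ s, w⟫ := mul_nonneg hsθ2.le h1
            have hR2 : Real.sin s * ⟪γ θ, w⟫ < 0 := mul_neg_of_pos_of_neg hss h2
            have hpos : 0 < Real.sin (θ - s) * ⟪γ 0, w⟫ := by linarith
            by_contra hcon
            have hneg' : ⟪γ 0, w⟫ < 0 := not_le.1 hcon
            exact absurd hpos (not_lt.2 (mul_nonpos_of_nonneg_of_nonpos hsθs.le hneg'.le))
      show μ (S (γ 0) (γ θ)) = _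
      rw [hset, measure_union hdisj (measurableSet_S _ _)]
      congr 1
      exact hangle s θ (by linarith) (by linarith)
  have hmono : ∀ s θ : ℝ, 0 ≤ s → s ≤ θ → θ ≤ Real.pi → g s ≤ g θ := by
    intro s θ hs0 hsθ hθπ
    rcases eq_or_lt_of_le hs0 with rfl | hs
    · rw [hg0]; exact zero_le
    · rcases eq_or_lt_of_le hsθ with rfl | hsθ'
      · exact le_refl _
      · rw [hadd s θ hs hsθ' hθπ]; exact le_self_add
  set G : ℝ → ℝ := fun θ => (g θ).toReal with hG
  have hfin : ∀ θ, g θ ≠ ⊤ := fun θ => measure_ne_top μ _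
  have hGadd : ∀ s θ : ℝ, 0 < s → s < θ → θ ≤ Real.pi → G θ = G s + G (θ - s) := by
    intro s θ h1 h2 h3
    show (g θ).toReal = (g s).toReal + (g (θ - s)).toReal
    rw [hadd s θ h1 h2 h3, ENNReal.toReal_add (hfin _) (hfin _)]
  have hG0 : G 0 = 0 := by
    show (g 0).toReal = 0
    rw [hg0]; simp
  have hGpi : G Real.pi = 1/2 := by
    show (g Real.pi).toReal = 1/2
    rw [hgpi]
    simp
  have hGmono : ∀ s θ : ℝ, 0 ≤ s → s ≤ θ → θ ≤ Real.pi → G s ≤ G θ := by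
    intro s θ h1 h2 h3
    exact ENNReal.toReal_mono (hfin θ) (hmono s θ h1 h2 h3)
  have hlin := linear_of_additive G hGadd hG0 hGpi hGmono
  set θab := Real.arccos ⟪a, b⟫ with hθab
  have hab1 : -1 < ⟪a, b⟫ := (abs_lt.1 hlt).1
  have hab2 : ⟪a, b⟫ < 1 := (abs_lt.1 hlt).2
  have hθ0 : 0 < θab := Real.arccos_pos.2 hab2
  have hθπ2 : θab < Real.pi := by
    refine lt_of_le_of_ne (hθab ▸ Real.arccos_le_pi _) (fun h => ?_)
    have hc := Real.cos_arccos hab1.le hab2.le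
    rw [← hθab, h, Real.cos_pi] at hc
    linarith
  have h1 : μ (S a b) = g θab := by
    refine measure_S_congr hN μ hinv ha hb (hγunit 0) (hγunit θab) ?_ hlt
    rw [hγγ]
    rw [show (0:ℝ) - θab = -θab by ring, Real.cos_neg]
    exact (Real.cos_arccos hab1.le hab2.le).symm
  rw [h1]
  have h2 : G θab = θab / (2*Real.pi) := hlin θab hθ0.le hθπ2.le
  have h3 : g θab = ENNReal.ofReal (G θab) := by
    show g θab = ENNReal.ofReal ((g θab).toReal)
    rw [ENNReal.ofReal_toReal (hfin _)]
  rw [h3, h2]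

end Stmt11Aux

open Stmt11Aux in
set_option maxHeartbeats 1000000 in
theorem stmt11 {N : ℕ} (u v : EuclideanSpace ℝ (Fin N))
    (hu : u ≠ 0) (hv : v ≠ 0)
    (μ : Measure (EuclideanSpace ℝ (Fin N))) [IsProbabilityMeasure μ]
    (hsphere : μ (Metric.sphere (0 : EuclideanSpace ℝ (Fin N)) 1) = 1)
    (hinv : ∀ f : EuclideanSpace ℝ (Fin N) ≃ₗᵢ[ℝ] EuclideanSpace ℝ (Fin N),
      μ.map f = μ) :
    μ {w | (0 ≤ ⟪u, w⟫ ↔ 0 ≤ ⟪v, w⟫)} =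
      ENNReal.ofReal (1 - Real.arccos (⟪u, v⟫ / (‖u‖ * ‖v‖)) / Real.pi) := by
  have hπ := Real.pi_pos
  have hu' : 0 < ‖u‖ := norm_pos_iff.2 hu
  have hv' : 0 < ‖v‖ := norm_pos_iff.2 hv
  have hCS : |⟪u, v⟫| ≤ ‖u‖ * ‖v‖ := abs_real_inner_le_norm u v
  by_cases hplus : ⟪u, v⟫ = ‖u‖ * ‖v‖
  · -- parallel, same direction
    have hpar : ‖v‖ • u = ‖u‖ • v := inner_eq_norm_mul_iff_real.1 hplus
    have hsign : ∀ w, (0 ≤ ⟪u, w⟫ ↔ 0 ≤ ⟪v, w⟫) := by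
      intro w
      have h := congrArg (fun z => ⟪z, w⟫) hpar
      simp only [real_inner_smul_left] at h
      constructor
      · intro h1; nlinarith
      · intro h1; nlinarith
    have hset : {w : EuclideanSpace ℝ (Fin N) | (0 ≤ ⟪u, w⟫ ↔ 0 ≤ ⟪v, w⟫)} = Set.univ := by
      ext w; simpa using hsign w
    rw [hset, measure_univ,
      show ⟪u, v⟫ / (‖u‖*‖v‖) = 1 by rw [hplus]; field_simp,
      Real.arccos_one]
    norm_num
  by_cases hminus : ⟪u, v⟫ = -(‖u‖ * ‖v‖)
  · -- antiparallel
    have hplus' : ⟪u, -v⟫ = ‖u‖ * ‖-v‖ := by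
      rw [inner_neg_right, norm_neg, hminus]; ring
    have hpar : ‖-v‖ • u = ‖u‖ • (-v) := inner_eq_norm_mul_iff_real.1 hplus'
    rw [norm_neg] at hpar
    have hrel : ∀ w, ‖v‖ * ⟪u, w⟫ = -(‖u‖ * ⟪v, w⟫) := by
      intro w
      have h := congrArg (fun z => ⟪z, w⟫) hpar
      simp only [real_inner_smul_left, inner_neg_left] at h
      linarith [h]
    have hset : {w : EuclideanSpace ℝ (Fin N) | (0 ≤ ⟪u, w⟫ ↔ 0 ≤ ⟪v, w⟫)}
        = {w : EuclideanSpace ℝ (Fin N) | ⟪u, w⟫ = 0} := by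
      ext w
      simp only [Set.mem_setOf_eq]
      constructor
      · intro hiff
        by_contra hne
        rcases lt_or_gt_of_ne hne with h | h
        · have h2 : 0 ≤ ⟪v, w⟫ := by nlinarith [hrel w]
          have := hiff.2 h2
          linarith
        · have h2 : ⟪v, w⟫ < 0 := by nlinarith [hrel w]
          have := hiff.1 h.le
          linarith
      · intro h0
        have h2 : ⟪v, w⟫ = 0 := by
          have h3 := hrel w
          rw [h0, mul_zero] at h3
          have h4 : ‖u‖ * ⟪v, w⟫ = 0 := by linarith
          rcases mul_eq_zero.1 h4 with h | h
          · exact absurd h (ne_of_gt hu')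
          · exact h
        rw [h0, h2]
    rw [hset, null_hyperplane μ hsphere hinv u hu,
      show ⟪u, v⟫ / (‖u‖*‖v‖) = -1 by rw [hminus]; field_simp,
      Real.arccos_neg_one, div_self (ne_of_gt hπ)]
    norm_num
  -- strict case
  have habs : |⟪u, v⟫| < ‖u‖ * ‖v‖ := by
    rcases lt_or_eq_of_le hCS with h | h
    · exact h
    · exfalso
      rcases (abs_eq (by positivity : (0:ℝ) ≤ ‖u‖*‖v‖)).1 h with h' | h'
      · exact hplus h'
      · exact hminus h'
  have hN : 2 ≤ N := by
    by_contra hN'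
    push_neg at hN'
    interval_cases N
    · exact hu (Subsingleton.elim _ _)
    · have hfr : finrank ℝ (EuclideanSpace ℝ (Fin 1)) = 1 := by simp
      have htop : (ℝ ∙ v) = ⊤ :=
        Submodule.eq_top_of_finrank_eq (by rw [finrank_span_singleton hv, hfr])
      have humem : u ∈ (ℝ ∙ v) := by rw [htop]; trivial
      obtain ⟨r, hr⟩ := Submodule.mem_span_singleton.1 humem
      have hr0 : r ≠ 0 := by
        intro h; rw [h, zero_smul] at hr; exact hu hr.symm
      rw [← hr, real_inner_smul_left, real_inner_self_eq_norm_sq, norm_smul,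
        Real.norm_eq_abs, abs_mul] at habs
      have habs2 : |‖v‖ ^ 2| = ‖v‖ ^ 2 := abs_of_nonneg (sq_nonneg _)
      rw [habs2] at habs
      nlinarith [habs, abs_nonneg r]
  set t := ⟪u, v⟫ / (‖u‖ * ‖v‖) with ht
  set ua := ‖u‖⁻¹ • u with hua
  set va := ‖v‖⁻¹ • v with hva
  have hua1 : ‖ua‖ = 1 := norm_smul_inv_norm hu
  have hva1 : ‖va‖ = 1 := norm_smul_inv_norm hv
  have hip : ⟪ua, va⟫ = t := by
    rw [hua, hva, real_inner_smul_left, real_inner_smul_right, ht]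
    field_simp
  have hip' : ⟪va, ua⟫ = t := by rw [real_inner_comm]; exact hip
  have hlt1 : |⟪ua, va⟫| < 1 := by
    rw [hip, ht, abs_div, abs_of_pos (by positivity : (0:ℝ) < ‖u‖*‖v‖),
      div_lt_one (by positivity)]
    exact habs
  have hlt2 : |⟪va, ua⟫| < 1 := by
    rw [hip']
    rw [hip] at hlt1
    exact hlt1
  have hsu : ∀ w, (0 ≤ ⟪ua, w⟫ ↔ 0 ≤ ⟪u, w⟫) := by
    intro w
    rw [hua, real_inner_smul_left]
    exact sign_mul_iff (inv_pos.2 hu')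
  have hsv : ∀ w, (0 ≤ ⟪va, w⟫ ↔ 0 ≤ ⟪v, w⟫) := by
    intro w
    rw [hva, real_inner_smul_left]
    exact sign_mul_iff (inv_pos.2 hv')
  have hTc : {w : EuclideanSpace ℝ (Fin N) | (0 ≤ ⟪u, w⟫ ↔ 0 ≤ ⟪v, w⟫)}ᶜ
      = S ua va ∪ S va ua := by
    ext w
    simp only [Set.mem_compl_iff, Set.mem_setOf_eq, Set.mem_union, S]
    rw [← not_le, ← not_le]
    rw [hsu w, hsv w]
    tauto
  have hmc : MeasurableSet ({w : EuclideanSpace ℝ (Fin N) | (0 ≤ ⟪u, w⟫ ↔ 0 ≤ ⟪v, w⟫)}ᶜ) := by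
    rw [hTc]
    exact (measurableSet_S _ _).union (measurableSet_S _ _)
  have hm1 := measure_S_eq hN μ hsphere hinv hua1 hva1 hlt1
  have hm2 := measure_S_eq hN μ hsphere hinv hva1 hua1 hlt2
  have hdisj : Disjoint (S ua va) (S va ua) := by
    rw [Set.disjoint_left]
    rintro w ⟨h1, h2⟩ ⟨h3, h4⟩
    linarith
  have harc0 : 0 ≤ Real.arccos t := Real.arccos_nonneg t
  have hcm : μ ({w : EuclideanSpace ℝ (Fin N) | (0 ≤ ⟪u, w⟫ ↔ 0 ≤ ⟪v, w⟫)}ᶜ)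
      = ENNReal.ofReal (Real.arccos t / Real.pi) := by
    rw [hTc, measure_union hdisj (measurableSet_S _ _), hm1, hm2, hip, hip',
      ← ENNReal.ofReal_add (by positivity) (by positivity)]
    congr 1
    field_simp
    ring
  have hfinal := prob_compl_eq_one_sub (μ := μ) hmc
  rw [compl_compl] at hfinal
  rw [hfinal, hcm]
  rw [ENNReal.ofReal_sub 1 (div_nonneg harc0 hπ.le), ENNReal.ofReal_one]
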